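/- For all integers k ≥ 1 and D ≥ k, the Gram matrix G_D is invertible and ∑_{τ ∈ S_k} |Wg^U(τ, D)| = (D−k)!/D!, where the sum is over all permutations τ of {1,...,k}. -/

import Mathlib

open Matrix

/-- The number of cycles of a permutation, counting fixed points as (trivial) cycles. -/
def numCycles {k : ℕ} (σ : Equiv.Perm (Fin k)) : ℕ :=
  Multiset.card σ.cycleType + (k - σ.support.card)

/-- The Gram matrix `G_D(σ,τ) = D^{#(σ⁻¹τ)}` on permutations of `{1,…,k}`. -/
def permGram (k D : ℕ) : Matrix (Equiv.Perm (Fin k)) (Equiv.Perm (Fin k)) ℝ :=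
  fun σ τ => (D : ℝ) ^ numCycles (σ⁻¹ * τ)

namespace Wg
open Equiv Equiv.Perm Finset

noncomputable def sgn {k : ℕ} (π : Equiv.Perm (Fin k)) : ℝ :=
  ((Equiv.Perm.sign π : ℤ) : ℝ)

theorem sgn_one {k : ℕ} : sgn (1 : Equiv.Perm (Fin k)) = 1 := by simp [sgn]

theorem sgn_mul {k : ℕ} (a b : Equiv.Perm (Fin k)) : sgn (a * b) = sgn a * sgn b := by
  simp [sgn]

theorem sgn_swap {k : ℕ} {a b : Fin k} (h : a ≠ b) : sgn (Equiv.swap a b) = -1 := by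
  simp [sgn, Equiv.Perm.sign_swap h]

theorem sgn_sq {k : ℕ} (a : Equiv.Perm (Fin k)) : sgn a * sgn a = 1 := by
  rcases Int.units_eq_one_or (Equiv.Perm.sign a) with h | h <;> simp [sgn, h]

theorem abs_sgn {k : ℕ} (a : Equiv.Perm (Fin k)) : |sgn a| = 1 := by
  rcases Int.units_eq_one_or (Equiv.Perm.sign a) with h | h <;> simp [sgn, h]

theorem sgn_inv {k : ℕ} (a : Equiv.Perm (Fin k)) : sgn a⁻¹ = sgn a := by
  simp [sgn]

/-- the truncated weight function -/
noncomputable def fS (k D : ℕ) (i : ℕ) (π : Equiv.Perm (Fin k)) : ℝ :=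
  if ∀ x : Fin k, i ≤ (x : ℕ) → π x = x then sgn π * (D : ℝ) ^ (numCycles π - (k - i)) else 0

theorem support_card_le_of_fix {k : ℕ} (i : ℕ) (π : Equiv.Perm (Fin k))
    (h : ∀ x : Fin k, i ≤ (x : ℕ) → π x = x) : π.support.card ≤ i := by
  classical
  have hsub : π.support ⊆ Finset.univ.filter (fun x : Fin k => (x : ℕ) < i) := by
    intro x hx
    simp only [Finset.mem_filter, Finset.mem_univ, true_and]
    by_contra hlt
    exact (Equiv.Perm.mem_support.1 hx) (h x (le_of_not_gt hlt))
  calc π.support.card ≤ (Finset.univ.filter (fun x : Fin k => (x : ℕ) < i)).card :=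
        Finset.card_le_card hsub
    _ ≤ (Finset.range i).card :=
        Finset.card_le_card_of_injOn (fun x => (x : ℕ))
          (by intro a ha; simp at ha; simpa using ha)
          (fun a _ b _ h => Fin.val_injective h)
    _ = i := Finset.card_range i



theorem card_support_le {k : ℕ} (g : Equiv.Perm (Fin k)) : g.support.card ≤ k := by
  simpa using Finset.card_le_univ g.support

theorem numCycles_one {k : ℕ} : numCycles (1 : Equiv.Perm (Fin k)) = k := by
  simp [numCycles]

theorem numCycles_inv {k : ℕ} (g : Equiv.Perm (Fin k)) : numCycles g⁻¹ = numCycles g := by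
  simp [numCycles, Equiv.Perm.cycleType_inv, Equiv.Perm.support_inv]

theorem numCycles_swap_mul {k : ℕ} (g : Equiv.Perm (Fin k)) (x : Fin k) (hx : g x ≠ x) :
    numCycles (Equiv.swap x (g x) * g) = numCycles g + 1 := by
  classical
  set c := g.cycleOf x with hc_def
  have hc : c.IsCycle := Equiv.Perm.isCycle_cycleOf g hx
  have hcx : c x = g x := Equiv.Perm.cycleOf_apply_self g x
  have hccx : c (g x) = g (g x) := Equiv.Perm.cycleOf_apply_apply_self g x
  have hmem : c ∈ g.cycleFactorsFinset := (Equiv.Perm.cycleOf_mem_cycleFactorsFinset_iff).2 (Equiv.Perm.mem_support.2 hx)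
  have hdisj : (g * c⁻¹).Disjoint c :=
    Equiv.Perm.disjoint_mul_inv_of_mem_cycleFactorsFinset hmem
  set r := g * c⁻¹ with hr_def
  have hg : r * c = g := by simp [hr_def]
  have hxc : x ∈ c.support := by rw [Equiv.Perm.mem_support, hcx]; exact hx
  have hsupp_le : r.support.card + c.support.card ≤ k := by
    have h1 := card_support_le g
    rwa [← hg, hdisj.card_support_mul] at h1
  have hctg : Multiset.card g.cycleType = Multiset.card r.cycleType + 1 := by
    rw [← hg, hdisj.cycleType_mul, hc.cycleType]
    simp
  have hsg : g.support.card = r.support.card + c.support.card := by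
    rw [← hg, hdisj.card_support_mul]
  have hcomm : r * c = c * r := hdisj.commute.eq
  by_cases hgg : g (g x) = x
  · have hcswap : c = Equiv.swap x (g x) := by
      have h2 := hc.eq_swap_of_apply_apply_eq_self (x := x)
        (by rw [hcx]; exact hx) (by rw [hcx, hccx]; exact hgg)
      rw [h2, hcx]
    have hcc : c * c = 1 := by rw [hcswap]; exact Equiv.swap_mul_self _ _
    have key : Equiv.swap x (g x) * g = r := by
      rw [← hcswap, ← hg, hcomm, ← mul_assoc, hcc, one_mul]
    have hsc : c.support.card = 2 := by
      rw [hcswap]; exact Equiv.Perm.card_support_swap (Ne.symm hx)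
    rw [key]
    simp only [numCycles]
    omega
  · set c' := Equiv.swap x (g x) * c with hc'_def
    have hc' : c'.IsCycle := by
      have h3 := hc.swap_mul (x := x) (by rw [hcx]; exact hx) (by rw [hcx, hccx]; exact hgg)
      rwa [hcx] at h3
    have hsupp' : c'.support = c.support.erase x := by
      have h4 := Equiv.Perm.support_swap_mul_eq c x (by rw [hcx, hccx]; exact hgg)
      rw [hcx] at h4
      rw [h4, Finset.erase_eq]
    have hcard' : c'.support.card = c.support.card - 1 := by
      rw [hsupp', Finset.card_erase_of_mem hxc]
    have hdisjsupp : _root_.Disjoint r.support c.support :=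
      Equiv.Perm.disjoint_iff_disjoint_support.1 hdisj
    have hdisj' : c'.Disjoint r := by
      rw [Equiv.Perm.disjoint_iff_disjoint_support, hsupp']
      exact (hdisjsupp.symm.mono_left (Finset.erase_subset _ _))
    have key : Equiv.swap x (g x) * g = c' * r := by
      rw [hc'_def, mul_assoc, ← hcomm, hg]
    have hct' : Multiset.card (c' * r).cycleType = Multiset.card r.cycleType + 1 := by
      rw [hdisj'.cycleType_mul, hc'.cycleType]
      simp [add_comm]
    have hs' : (c' * r).support.card = c.support.card - 1 + r.support.card := by
      rw [hdisj'.card_support_mul, hcard']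
    have hscpos : 1 ≤ c.support.card := Finset.card_pos.2 ⟨x, hxc⟩
    rw [key]
    simp only [numCycles, hct', hs', hctg, hsg]
    omega


theorem numCycles_ge_of_fix {k : ℕ} (i : ℕ) (π : Equiv.Perm (Fin k))
    (h : ∀ x : Fin k, i ≤ (x : ℕ) → π x = x) : k - i ≤ numCycles π := by
  have h1 := support_card_le_of_fix i π h
  have h2 := card_support_le π
  unfold numCycles; omega

theorem fS_step {k D : ℕ} (i : ℕ) (hik : i < k) (π : Equiv.Perm (Fin k)) :
    fS k D (i + 1) π =
      (D : ℝ) * fS k D i π -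
        ∑ j ∈ Finset.univ.filter (fun j : Fin k => j < (⟨i, hik⟩ : Fin k)),
          fS k D i (π * Equiv.swap j ⟨i, hik⟩) := by
  classical
  set t : Fin k := ⟨i, hik⟩ with ht
  by_cases h1 : ∀ x : Fin k, i + 1 ≤ (x : ℕ) → π x = x
  · by_cases h2 : π t = t
    · -- π fixes everything with index ≥ i
      have hfix : ∀ x : Fin k, i ≤ (x : ℕ) → π x = x := by
        intro x hx
        rcases eq_or_lt_of_le hx with he | hl
        · have hxt : x = t := by apply Fin.ext; simp [ht, ← he]
          rw [hxt]; exact h2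
        · exact h1 x hl
      have hsum0 : ∀ j ∈ Finset.univ.filter (fun j : Fin k => j < t),
          fS k D i (π * Equiv.swap j t) = 0 := by
        intro j hj
        have hjt : j < t := (Finset.mem_filter.1 hj).2
        have hne : j ≠ t := ne_of_lt hjt
        rw [fS, if_neg]
        intro hcon
        have hπj : π j = t := by
          have h5 := hcon t (by simp [ht])
          rwa [Equiv.Perm.mul_apply, Equiv.swap_apply_right] at h5
        exact hne (π.injective (by rw [hπj, h2]))
      rw [Finset.sum_eq_zero hsum0]
      rw [fS, if_pos h1, fS, if_pos hfix]
      have hge : k - i ≤ numCycles π := numCycles_ge_of_fix i π hfix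
      have he : numCycles π - (k - (i + 1)) = (numCycles π - (k - i)) + 1 := by omega
      rw [he, pow_succ]
      ring
    · -- π moves t
      set a : Fin k := π⁻¹ t with ha_def
      have ha1 : π a = t := Equiv.apply_symm_apply π t
      have ha_ne : a ≠ t := by
        intro hcon; exact h2 (by rw [← hcon] at ha1 ⊢; exact ha1)
      have ha_lt : a < t := by
        rcases lt_or_ge a t with h | h
        · exact h
        · exfalso
          have hval : i + 1 ≤ (a : ℕ) := by
            have h6 : (t : ℕ) ≤ (a : ℕ) := h
            have h7 : (a : ℕ) ≠ i := fun hcc => ha_ne (Fin.ext (by simp [ht, hcc]))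
            simp only [ht] at h6; omega
          exact ha_ne ((h1 a hval).symm.trans ha1)
      have hfπ : fS k D i π = 0 := by
        rw [fS, if_neg]
        intro hcon
        exact h2 (hcon t (by simp [ht]))
      have hsum : ∑ j ∈ Finset.univ.filter (fun j : Fin k => j < t),
          fS k D i (π * Equiv.swap j t) = fS k D i (π * Equiv.swap a t) := by
        apply Finset.sum_eq_single_of_mem
        · simp [ha_lt]
        · intro j hj hja
          rw [fS, if_neg]
          intro hcon
          have hπj : π j = t := by
            have h5 := hcon t (by simp [ht])
            rwa [Equiv.Perm.mul_apply, Equiv.swap_apply_right] at h5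
          exact hja (π.injective (by rw [hπj, ha1]))
      rw [hsum, hfπ]
      set σ : Equiv.Perm (Fin k) := π * Equiv.swap a t with hσ
      have hσfix : ∀ x : Fin k, i ≤ (x : ℕ) → σ x = x := by
        intro x hx
        by_cases hxt : x = t
        · rw [hxt, hσ]
          simp only [Equiv.Perm.mul_apply, Equiv.swap_apply_right]
          exact ha1
        · have hx1 : i + 1 ≤ (x : ℕ) := by
            have : (x : ℕ) ≠ i := fun hcc => hxt (Fin.ext (by simp [ht, hcc]))
            omega
          have hxa : x ≠ a := by
            intro hcon
            have : (a : ℕ) < i := ha_lt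
            omega
          rw [hσ]
          simp only [Equiv.Perm.mul_apply]
          rw [Equiv.swap_apply_of_ne_of_ne hxa hxt]
          exact h1 x hx1
      have hσsgn : sgn σ = -sgn π := by
        rw [hσ, sgn_mul, sgn_swap ha_ne]; ring
      have hσnum : numCycles σ = numCycles π + 1 := by
        have hginv : σ⁻¹ = Equiv.swap t (π⁻¹ t) * π⁻¹ := by
          rw [hσ, _root_.mul_inv_rev, Equiv.swap_inv, Equiv.swap_comm, ha_def]
        have hmoves : π⁻¹ t ≠ t := by
          rw [← ha_def]; exact ha_ne
        have h8 : numCycles (Equiv.swap t (π⁻¹ t) * π⁻¹) = numCycles π⁻¹ + 1 :=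
          numCycles_swap_mul π⁻¹ t hmoves
        calc numCycles σ = numCycles σ⁻¹ := (numCycles_inv σ).symm
          _ = numCycles π⁻¹ + 1 := by rw [hginv]; exact h8
          _ = numCycles π + 1 := by rw [numCycles_inv]
      rw [fS, if_pos h1, fS, if_pos hσfix, hσsgn, hσnum]
      have hge : k - (i + 1) ≤ numCycles π := numCycles_ge_of_fix (i + 1) π h1
      have he : numCycles π + 1 - (k - i) = numCycles π - (k - (i + 1)) := by omega
      rw [he]
      ring
  · -- π moves a point of index > i : everything vanishes
    push_neg at h1
    obtain ⟨x, hx_ge, hx_ne⟩ := h1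
    have hLHS : fS k D (i + 1) π = 0 := by
      rw [fS, if_neg]; intro hcon; exact hx_ne (hcon x hx_ge)
    have hfπ : fS k D i π = 0 := by
      rw [fS, if_neg]; intro hcon; exact hx_ne (hcon x (by omega))
    have hsum0 : ∀ j ∈ Finset.univ.filter (fun j : Fin k => j < t),
        fS k D i (π * Equiv.swap j t) = 0 := by
      intro j hj
      have hjt : j < t := (Finset.mem_filter.1 hj).2
      have hji : (j : ℕ) < i := hjt
      rw [fS, if_neg]
      intro hcon
      have hxj : x ≠ j := by intro hcc; rw [hcc] at hx_ge; omega
      have hxt : x ≠ t := by intro hcc; rw [hcc] at hx_ge; simp only [ht] at hx_ge; omega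
      have h9 := hcon x (by omega)
      rw [Equiv.Perm.mul_apply, Equiv.swap_apply_of_ne_of_ne hxj hxt] at h9
      exact hx_ne h9
    rw [hLHS, hfπ, Finset.sum_eq_zero hsum0]
    ring

noncomputable def Smat (k : ℕ) (t : Fin k) :
    Matrix (Equiv.Perm (Fin k)) (Equiv.Perm (Fin k)) ℝ :=
  fun ρ τ => ∑ j ∈ Finset.univ.filter (fun j : Fin k => j < t),
    (if τ = ρ * Equiv.swap j t then (1 : ℝ) else 0)

noncomputable def Cmat (k D : ℕ) (t : Fin k) :
    Matrix (Equiv.Perm (Fin k)) (Equiv.Perm (Fin k)) ℝ :=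
  fun ρ τ => (D : ℝ) * (if τ = ρ then 1 else 0) - Smat k t ρ τ

theorem Smat_nonneg {k : ℕ} (t : Fin k) (ρ τ : Equiv.Perm (Fin k)) :
    0 ≤ Smat k t ρ τ := by
  apply Finset.sum_nonneg
  intro j _
  split <;> norm_num

theorem filter_lt_card {k : ℕ} (t : Fin k) :
    (Finset.univ.filter (fun j : Fin k => j < t)).card = (t : ℕ) := by
  have h : Finset.univ.filter (fun j : Fin k => j < t) = Finset.Iio t := by
    ext j; simp
  rw [h, Fin.card_Iio]

theorem Smat_rowsum {k : ℕ} (t : Fin k) (ρ : Equiv.Perm (Fin k)) :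
    ∑ τ, Smat k t ρ τ = ((t : ℕ) : ℝ) := by
  classical
  unfold Smat
  rw [Finset.sum_comm]
  have h1 : ∀ j ∈ Finset.univ.filter (fun j : Fin k => j < t),
      (∑ τ : Equiv.Perm (Fin k), if τ = ρ * Equiv.swap j t then (1 : ℝ) else 0) = 1 := by
    intro j _; simp
  rw [Finset.sum_congr rfl h1, Finset.sum_const, filter_lt_card, nsmul_eq_mul, mul_one]

theorem Smat_diag {k : ℕ} (t : Fin k) (ρ : Equiv.Perm (Fin k)) : Smat k t ρ ρ = 0 := by
  apply Finset.sum_eq_zero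
  intro j hj
  have hjt : j ≠ t := ne_of_lt (Finset.mem_filter.1 hj).2
  rw [if_neg]
  intro hcon
  have h1 : (1 : Equiv.Perm (Fin k)) = Equiv.swap j t :=
    mul_left_cancel (a := ρ) (by rw [← hcon, mul_one])
  have h2 : Equiv.swap j t j = j := by rw [← h1]; rfl
  rw [Equiv.swap_apply_left] at h2
  exact hjt h2.symm

theorem mul_Cmat {k D : ℕ} (A : Matrix (Equiv.Perm (Fin k)) (Equiv.Perm (Fin k)) ℝ)
    (t : Fin k) (σ τ : Equiv.Perm (Fin k)) :
    (A * Cmat k D t) σ τ = (D : ℝ) * A σ τ -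
      ∑ j ∈ Finset.univ.filter (fun j : Fin k => j < t), A σ (τ * Equiv.swap j t) := by
  classical
  rw [Matrix.mul_apply]
  have hswap : ∀ (j : Fin k) (ρ : Equiv.Perm (Fin k)),
      (τ = ρ * Equiv.swap j t) = (ρ = τ * Equiv.swap j t) := by
    intro j ρ
    apply propext
    constructor <;>
      (intro h; rw [h, mul_assoc, Equiv.swap_mul_self, mul_one])
  simp only [Cmat, Smat, mul_sub, Finset.mul_sum, mul_ite, mul_one, mul_zero]
  rw [Finset.sum_sub_distrib]
  congr 1
  · rw [Finset.sum_ite_eq Finset.univ τ (fun ρ => A σ ρ * (D : ℝ))]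
    simp [mul_comm]
  · rw [Finset.sum_comm]
    apply Finset.sum_congr rfl
    intro j _
    simp only [hswap]
    rw [Finset.sum_ite_eq' Finset.univ (τ * Equiv.swap j t) (fun ρ => A σ ρ)]
    simp

theorem Cmat_rowsum {k D : ℕ} (t : Fin k) (ρ : Equiv.Perm (Fin k)) :
    ∑ τ, Cmat k D t ρ τ = (D : ℝ) - ((t : ℕ) : ℝ) := by
  classical
  simp only [Cmat]
  rw [Finset.sum_sub_distrib, Smat_rowsum]
  congr 1
  simp only [mul_ite, mul_one, mul_zero]
  rw [Finset.sum_ite_eq' Finset.univ ρ (fun _ => (D : ℝ))]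
  simp

theorem Cmat_isUnit {k D : ℕ} (t : Fin k) (hD : (t : ℕ) < D) :
    IsUnit (Cmat k D t).det := by
  classical
  rw [isUnit_iff_ne_zero]
  apply det_ne_zero_of_sum_row_lt_diag
  intro ρ
  have hdiag : Cmat k D t ρ ρ = (D : ℝ) := by
    simp [Cmat, Smat_diag]
  rw [hdiag]
  have hsum : ∑ τ ∈ Finset.univ.erase ρ, ‖Cmat k D t ρ τ‖
      = ∑ τ ∈ Finset.univ.erase ρ, Smat k t ρ τ := by
    apply Finset.sum_congr rfl
    intro τ hτ
    have hne : τ ≠ ρ := (Finset.mem_erase.1 hτ).1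
    have : Cmat k D t ρ τ = -Smat k t ρ τ := by simp [Cmat, hne]
    rw [this, norm_neg, Real.norm_eq_abs, abs_of_nonneg (Smat_nonneg t ρ τ)]
  rw [hsum]
  have h2 : ∑ τ ∈ Finset.univ.erase ρ, Smat k t ρ τ ≤ ∑ τ, Smat k t ρ τ :=
    Finset.sum_le_sum_of_subset_of_nonneg (Finset.subset_univ _)
      (fun τ _ _ => Smat_nonneg t ρ τ)
  rw [Smat_rowsum] at h2
  have h3 : ((t : ℕ) : ℝ) < (D : ℝ) := by exact_mod_cast hD
  rw [Real.norm_eq_abs, abs_of_nonneg (by positivity : (0:ℝ) ≤ (D:ℝ))]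
  linarith

theorem Cmat_mulVec_nonneg {k D : ℕ} (t : Fin k) (hD : (t : ℕ) < D)
    (x v : Equiv.Perm (Fin k) → ℝ) (hv : ∀ i, 0 ≤ v i)
    (hCx : (Cmat k D t) *ᵥ x = v) : ∀ i, 0 ≤ x i := by
  classical
  obtain ⟨i0, -, hmin⟩ := Finset.exists_min_image Finset.univ x ⟨1, Finset.mem_univ 1⟩
  have hkey : 0 ≤ x i0 := by
    by_contra hneg
    push_neg at hneg
    have hval : (Cmat k D t *ᵥ x) i0 = (D : ℝ) * x i0 - ∑ ρ, Smat k t i0 ρ * x ρ := by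
      rw [Matrix.mulVec, dotProduct]
      simp only [Cmat, sub_mul, ite_mul, one_mul, zero_mul, mul_assoc]
      rw [Finset.sum_sub_distrib]
      congr 1
      rw [Finset.sum_congr rfl (fun ρ _ => by rw [mul_ite, mul_zero])]
      rw [Finset.sum_ite_eq' Finset.univ i0 (fun ρ => (D : ℝ) * x ρ)]
      simp
    have hbound : ∑ ρ, Smat k t i0 ρ * x ρ ≥ ∑ ρ, Smat k t i0 ρ * x i0 := by
      apply Finset.sum_le_sum
      intro ρ _
      exact mul_le_mul_of_nonneg_left (hmin ρ (Finset.mem_univ ρ)) (Smat_nonneg t i0 ρ)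
    have hsum : ∑ ρ, Smat k t i0 ρ * x i0 = ((t : ℕ) : ℝ) * x i0 := by
      rw [← Finset.sum_mul, Smat_rowsum]
    have hlt : (Cmat k D t *ᵥ x) i0 < 0 := by
      rw [hval]
      have h3 : ((t : ℕ) : ℝ) < (D : ℝ) := by exact_mod_cast hD
      nlinarith [hbound, hsum]
    rw [hCx] at hlt
    exact absurd (hv i0) (not_le.2 hlt)
  intro i
  exact le_trans hkey (hmin i (Finset.mem_univ i))

theorem Cmat_inv_nonneg {k D : ℕ} (t : Fin k) (hD : (t : ℕ) < D) :
    ∀ σ τ, 0 ≤ (Cmat k D t)⁻¹ σ τ := by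
  classical
  intro σ τ0
  have hunit := Cmat_isUnit t (D := D) hD
  have hCx : (Cmat k D t) *ᵥ (fun σ => (Cmat k D t)⁻¹ σ τ0)
      = fun σ => (1 : Matrix (Equiv.Perm (Fin k)) (Equiv.Perm (Fin k)) ℝ) σ τ0 := by
    funext ρ
    rw [Matrix.mulVec, dotProduct, ← Matrix.mul_apply, Matrix.mul_nonsing_inv _ hunit]
  exact Cmat_mulVec_nonneg t hD _ _
    (fun i => by by_cases h : i = τ0 <;> simp [Matrix.one_apply, h]) hCx σ

noncomputable def Tpp (k D : ℕ) : ℕ → Matrix (Equiv.Perm (Fin k)) (Equiv.Perm (Fin k)) ℝ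
  | 0 => 1
  | (i + 1) => Tpp k D i * (if h : i < k then Cmat k D ⟨i, h⟩ else 1)

theorem fS_zero {k D : ℕ} (π : Equiv.Perm (Fin k)) :
    fS k D 0 π = if π = 1 then 1 else 0 := by
  by_cases hπ : π = 1
  · rw [if_pos hπ, fS, if_pos]
    · subst hπ
      rw [sgn_one, numCycles_one]
      simp
    · intro x _; rw [hπ]; rfl
  · rw [if_neg hπ, fS, if_neg]
    intro hcon
    exact hπ (Equiv.ext fun x => hcon x (Nat.zero_le _))

theorem fS_top {k D : ℕ} (π : Equiv.Perm (Fin k)) :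
    fS k D k π = sgn π * (D : ℝ) ^ numCycles π := by
  rw [fS, if_pos]
  · simp
  · intro x hx
    exact absurd x.isLt (not_lt.2 hx)

theorem Tpp_eq {k D : ℕ} : ∀ i, i ≤ k →
    Tpp k D i = fun σ τ => fS k D i (σ⁻¹ * τ) := by
  intro i
  induction i with
  | zero =>
    intro _
    funext σ τ
    show (1 : Matrix (Equiv.Perm (Fin k)) (Equiv.Perm (Fin k)) ℝ) σ τ = fS k D 0 (σ⁻¹ * τ)
    rw [fS_zero, Matrix.one_apply]
    by_cases h : σ = τ
    · rw [if_pos h, if_pos (by rw [h, inv_mul_cancel])]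
    · rw [if_neg h, if_neg (by rw [inv_mul_eq_one]; exact h)]
  | succ i ih =>
    intro hik1
    have hik : i < k := hik1
    funext σ τ
    show (Tpp k D i * (if h : i < k then Cmat k D ⟨i, h⟩ else 1)) σ τ = _
    rw [dif_pos hik, mul_Cmat, ih (le_of_lt hik), fS_step i hik (σ⁻¹ * τ)]
    simp only [mul_assoc]

theorem Tpp_props {k D : ℕ} (hkD : k ≤ D) : ∀ i, i ≤ k →
    IsUnit (Tpp k D i).det ∧ (∀ σ τ, 0 ≤ (Tpp k D i)⁻¹ σ τ) ∧
    (∀ σ, ∑ τ, Tpp k D i σ τ = ∏ m ∈ Finset.range i, ((D : ℝ) - (m : ℕ))) := by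
  intro i
  induction i with
  | zero =>
    intro _
    refine ⟨?_, ?_, ?_⟩
    · show IsUnit (1 : Matrix (Equiv.Perm (Fin k)) (Equiv.Perm (Fin k)) ℝ).det
      simp
    · show ∀ σ τ, 0 ≤ (1 : Matrix (Equiv.Perm (Fin k)) (Equiv.Perm (Fin k)) ℝ)⁻¹ σ τ
      rw [show (1 : Matrix (Equiv.Perm (Fin k)) (Equiv.Perm (Fin k)) ℝ)⁻¹ = 1 from
        Matrix.inv_eq_right_inv (by rw [one_mul])]
      intro σ τ
      by_cases h : σ = τ <;> simp [Matrix.one_apply, h]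
    · intro σ
      show ∑ τ, (1 : Matrix (Equiv.Perm (Fin k)) (Equiv.Perm (Fin k)) ℝ) σ τ = _
      simp [Matrix.one_apply]
  | succ i ih =>
    intro h
    obtain ⟨hu, hnn, hrow⟩ := ih (by omega)
    have hik : i < k := h
    have htD : i < D := lt_of_lt_of_le hik hkD
    have hstep : Tpp k D (i + 1) = Tpp k D i * Cmat k D ⟨i, hik⟩ := by
      show Tpp k D i * (if h : i < k then Cmat k D ⟨i, h⟩ else 1) = _
      rw [dif_pos hik]
    refine ⟨?_, ?_, ?_⟩
    · rw [hstep, Matrix.det_mul]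
      exact hu.mul (Cmat_isUnit _ htD)
    · intro σ τ
      rw [hstep, Matrix.mul_inv_rev, Matrix.mul_apply]
      apply Finset.sum_nonneg
      intro ρ _
      exact mul_nonneg (Cmat_inv_nonneg _ htD _ _) (hnn _ _)
    · intro σ
      rw [hstep]
      simp only [Matrix.mul_apply]
      rw [Finset.sum_comm]
      have h1 : ∀ ρ, ∑ τ, Tpp k D i σ ρ * Cmat k D ⟨i, hik⟩ ρ τ
          = Tpp k D i σ ρ * ((D : ℝ) - (i : ℕ)) := by
        intro ρ
        rw [← Finset.mul_sum, Cmat_rowsum]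
      rw [Finset.sum_congr rfl (fun ρ _ => h1 ρ), ← Finset.sum_mul, hrow,
        Finset.prod_range_succ]

end Wg

/-- For all `k ≥ 1` and `D ≥ k`, the Gram matrix `G_D` is invertible and
the unitary Weingarten function `Wg^U(τ, D) = (G_D⁻¹)(id, τ)` satisfies
`∑_{τ ∈ S_k} |Wg^U(τ, D)| = (D−k)!/D!`. -/
theorem weingarten_abs_sum :
    ∀ (k D : ℕ), 1 ≤ k → k ≤ D →
      IsUnit (permGram k D) ∧
      ∑ τ : Equiv.Perm (Fin k), |(permGram k D)⁻¹ 1 τ|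
        = (Nat.factorial (D - k) : ℝ) / (Nat.factorial D : ℝ) := by
  intro k D hk hkD
  classical
  obtain ⟨hu, hnn, hrow⟩ := Wg.Tpp_props (k := k) (D := D) hkD k le_rfl
  set T : Matrix (Equiv.Perm (Fin k)) (Equiv.Perm (Fin k)) ℝ := Wg.Tpp k D k with hT
  have hTeq : ∀ σ τ, T σ τ = Wg.sgn (σ⁻¹ * τ) * (D : ℝ) ^ numCycles (σ⁻¹ * τ) := by
    intro σ τ
    rw [hT, Wg.Tpp_eq k le_rfl]
    exact Wg.fS_top _
  set Δ : Matrix (Equiv.Perm (Fin k)) (Equiv.Perm (Fin k)) ℝ :=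
    Matrix.diagonal (fun σ => Wg.sgn σ) with hΔ
  have hΔΔ : Δ * Δ = 1 := by
    rw [hΔ, Matrix.diagonal_mul_diagonal]
    have h0 : (fun σ : Equiv.Perm (Fin k) => Wg.sgn σ * Wg.sgn σ) = fun _ => (1 : ℝ) :=
      funext fun σ => Wg.sgn_sq σ
    rw [h0, Matrix.diagonal_one]
  have hG : permGram k D = Δ * T * Δ := by
    funext σ τ
    have h1 : (Δ * T * Δ) σ τ = Wg.sgn σ * T σ τ * Wg.sgn τ := by
      rw [hΔ, Matrix.mul_diagonal, Matrix.diagonal_mul]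
    rw [h1, hTeq]
    have h2 : Wg.sgn (σ⁻¹ * τ) = Wg.sgn σ * Wg.sgn τ := by
      rw [Wg.sgn_mul, Wg.sgn_inv]
    rw [h2]
    show (D : ℝ) ^ numCycles (σ⁻¹ * τ) = _
    have h3 := Wg.sgn_sq σ
    have h4 := Wg.sgn_sq τ
    have h5 : Wg.sgn σ * (Wg.sgn σ * Wg.sgn τ * (D : ℝ) ^ numCycles (σ⁻¹ * τ)) * Wg.sgn τ
        = (Wg.sgn σ * Wg.sgn σ) * ((Wg.sgn τ * Wg.sgn τ)
            * (D : ℝ) ^ numCycles (σ⁻¹ * τ)) := by ring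
    rw [h5, h3, h4, one_mul, one_mul]
  have hTunit : IsUnit T := (Matrix.isUnit_iff_isUnit_det _).2 hu
  have hΔunit : IsUnit Δ := ⟨⟨Δ, Δ, hΔΔ, hΔΔ⟩, rfl⟩
  have hΔinv : Δ⁻¹ = Δ := Matrix.inv_eq_right_inv hΔΔ
  refine ⟨by rw [hG]; exact (hΔunit.mul hTunit).mul hΔunit, ?_⟩
  have hGinv : (permGram k D)⁻¹ = Δ * T⁻¹ * Δ := by
    rw [hG, Matrix.mul_inv_rev, Matrix.mul_inv_rev, hΔinv, ← mul_assoc]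
  have hentry : ∀ τ, (permGram k D)⁻¹ 1 τ = T⁻¹ 1 τ * Wg.sgn τ := by
    intro τ
    rw [hGinv]
    have h1 : (Δ * T⁻¹ * Δ) 1 τ = Wg.sgn (1 : Equiv.Perm (Fin k)) * T⁻¹ 1 τ * Wg.sgn τ := by
      rw [hΔ, Matrix.mul_diagonal, Matrix.diagonal_mul]
    rw [h1, Wg.sgn_one, one_mul]
  set c : ℝ := ∏ m ∈ Finset.range k, ((D : ℝ) - (m : ℕ)) with hc
  have hcpos : 0 < c := by
    rw [hc]
    apply Finset.prod_pos
    intro m hm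
    have hmk : m < k := Finset.mem_range.1 hm
    have hmD : (m : ℝ) < (D : ℝ) := by exact_mod_cast lt_of_lt_of_le hmk hkD
    linarith
  have hmulvec : T *ᵥ (fun _ => c⁻¹) = fun _ => (1 : ℝ) := by
    funext σ
    show ∑ τ, T σ τ * c⁻¹ = 1
    rw [← Finset.sum_mul, hrow σ]
    exact mul_inv_cancel₀ (ne_of_gt hcpos)
  have hinvrow : ∑ τ, T⁻¹ 1 τ = c⁻¹ := by
    have h5 : T⁻¹ *ᵥ (fun _ => (1 : ℝ)) = fun _ => c⁻¹ := by
      rw [← hmulvec, Matrix.mulVec_mulVec, Matrix.nonsing_inv_mul _ hu, Matrix.one_mulVec]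
    have h6 := congrFun h5 1
    simp only [Matrix.mulVec, dotProduct, mul_one] at h6
    exact h6
  calc ∑ τ, |(permGram k D)⁻¹ 1 τ| = ∑ τ, T⁻¹ 1 τ := by
        apply Finset.sum_congr rfl
        intro τ _
        rw [hentry τ, abs_mul, Wg.abs_sgn, mul_one, abs_of_nonneg (hnn 1 τ)]
    _ = c⁻¹ := hinvrow
    _ = (Nat.factorial (D - k) : ℝ) / (Nat.factorial D : ℝ) := by
        have hdesc : c = (D.descFactorial k : ℝ) := by
          rw [hc, Nat.descFactorial_eq_prod_range, Nat.cast_prod]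
          apply Finset.prod_congr rfl
          intro m hm
          have hmk : m < k := Finset.mem_range.1 hm
          rw [Nat.cast_sub (le_of_lt (lt_of_lt_of_le hmk hkD))]
        have hfact : ((D - k).factorial : ℝ) * (D.descFactorial k : ℝ)
            = (D.factorial : ℝ) := by
          exact_mod_cast congrArg (fun n : ℕ => (n : ℝ)) (Nat.factorial_mul_descFactorial hkD)
        have hne : c ≠ 0 := ne_of_gt hcpos
        rw [hdesc] at hne
        rw [hdesc]
        have hfne : (Nat.factorial D : ℝ) ≠ 0 := by positivity
        have hfne2 : ((D - k).factorial : ℝ) ≠ 0 := by positivity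
        field_simp
        linarith [hfact]
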